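/- Let M ≠ 0, Λ ∈ ℝ, and ℓ ≥ 2 an integer. With μ = (ℓ−1)(ℓ+2), w = (ℓ−1)ℓ(ℓ+1)(ℓ+2)/(12M), W(r) = w + 6M f(r)/(r(μr + 6M)), and Z(r) = (2MΛr³ + μr(r − 3M) − 6M²)/(r²(μr + 6M)), one has for all r > 0 with μr + 6M ≠ 0: (i) f(r)·(ℓ(ℓ+1)/r² − 6M/r³) + f(r)·W'(r) + Z(r)·W(r) = −Λℓ(ℓ+1)/6 + (ΛM + w)/r + (ℓ(ℓ+1) − 6Mw)/(2r²) − (ℓ(ℓ+1) + 3)M/r³ + 6M²/r⁴, and (ii) W(r) + Z(r) = w + (r − 3M)/r². -/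

import Mathlib

private lemma stmt_18_key (M Λ : ℝ) (hM : M ≠ 0) (L : ℝ) (r : ℝ) (hr : 0 < r)
    (hden : (L - 1) * (L + 2) * r + 6 * M ≠ 0) :
    ((1 - 2 * M / r - Λ * r ^ 2 / 3) * (L * (L + 1) / r ^ 2 - 6 * M / r ^ 3)
        + (1 - 2 * M / r - Λ * r ^ 2 / 3) *
          deriv (fun r => (L - 1) * L * (L + 1) * (L + 2) / (12 * M)
            + 6 * M * (1 - 2 * M / r - Λ * r ^ 2 / 3)
              / (r * ((L - 1) * (L + 2) * r + 6 * M))) r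
        + (2 * M * Λ * r ^ 3 + (L - 1) * (L + 2) * r * (r - 3 * M) - 6 * M ^ 2)
            / (r ^ 2 * ((L - 1) * (L + 2) * r + 6 * M))
          * ((L - 1) * L * (L + 1) * (L + 2) / (12 * M)
            + 6 * M * (1 - 2 * M / r - Λ * r ^ 2 / 3)
              / (r * ((L - 1) * (L + 2) * r + 6 * M)))
      = -(Λ * L * (L + 1)) / 6
        + (Λ * M + (L - 1) * L * (L + 1) * (L + 2) / (12 * M)) / r
        + (L * (L + 1) - 6 * M * ((L - 1) * L * (L + 1) * (L + 2) / (12 * M)))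
            / (2 * r ^ 2)
        - (L * (L + 1) + 3) * M / r ^ 3 + 6 * M ^ 2 / r ^ 4) ∧
    ((L - 1) * L * (L + 1) * (L + 2) / (12 * M)
        + 6 * M * (1 - 2 * M / r - Λ * r ^ 2 / 3)
          / (r * ((L - 1) * (L + 2) * r + 6 * M))
        + (2 * M * Λ * r ^ 3 + (L - 1) * (L + 2) * r * (r - 3 * M) - 6 * M ^ 2)
            / (r ^ 2 * ((L - 1) * (L + 2) * r + 6 * M)))
      = (L - 1) * L * (L + 1) * (L + 2) / (12 * M) + (r - 3 * M) / r ^ 2 := by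
  have hr0 : r ≠ 0 := hr.ne'
  have hg : r * ((L - 1) * (L + 2) * r + 6 * M) ≠ 0 := mul_ne_zero hr0 hden
  -- derivative of f
  have hf : HasDerivAt (fun r : ℝ => 1 - 2 * M / r - Λ * r ^ 2 / 3)
      (2 * M / r ^ 2 - 2 * Λ * r / 3) r := by
    have h1 : HasDerivAt (fun r : ℝ => 2 * M / r)
        ((0 * r - 2 * M * 1) / r ^ 2) r :=
      (hasDerivAt_const r (2 * M)).div (hasDerivAt_id r) hr0
    have h2 : HasDerivAt (fun r : ℝ => Λ * r ^ 2 / 3) (Λ * (2 * r ^ 1) / 3) r :=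
      (((hasDerivAt_pow 2 r).const_mul Λ).div_const 3)
    have := ((hasDerivAt_const r (1 : ℝ)).sub h1).sub h2
    refine this.congr_deriv ?_
    ring
  -- derivative of denominator
  have hgd : HasDerivAt (fun r : ℝ => r * ((L - 1) * (L + 2) * r + 6 * M))
      (1 * ((L - 1) * (L + 2) * r + 6 * M) + r * ((L - 1) * (L + 2) * 1 + 0)) r := by
    exact (hasDerivAt_id r).mul
      ((((hasDerivAt_id r).const_mul ((L - 1) * (L + 2))).add (hasDerivAt_const r (6 * M))))
  have hW : HasDerivAt (fun r => (L - 1) * L * (L + 1) * (L + 2) / (12 * M)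
      + 6 * M * (1 - 2 * M / r - Λ * r ^ 2 / 3)
        / (r * ((L - 1) * (L + 2) * r + 6 * M)))
      ((6 * M * (2 * M / r ^ 2 - 2 * Λ * r / 3) * (r * ((L - 1) * (L + 2) * r + 6 * M))
        - 6 * M * (1 - 2 * M / r - Λ * r ^ 2 / 3) *
          (1 * ((L - 1) * (L + 2) * r + 6 * M) + r * ((L - 1) * (L + 2) * 1 + 0)))
        / (r * ((L - 1) * (L + 2) * r + 6 * M)) ^ 2) r :=
    ((hf.const_mul (6 * M)).div hgd hg).const_add _
  rw [hW.deriv]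
  constructor
  · generalize hD : (L - 1) * (L + 2) * r + 6 * M = D at hden hg ⊢
    field_simp
    subst hD
    ring
  · generalize hD : (L - 1) * (L + 2) * r + 6 * M = D at hden hg ⊢
    field_simp
    subst hD
    ring

/-- The cancellation identities (paper eq. (cancel) and following) showing that
all `(μr + 6M)` denominators cancel in `f·V^{RW} + f·W' + Z·W` and in `W + Z`,
which allows the gauge-invariant scalar `G₊` to be written entirely in terms of
solutions of the four-dimensional Regge-Wheeler equation. -/
theorem stmt_18 (M Λ : ℝ) (hM : M ≠ 0) (ℓ : ℕ) (hℓ : 2 ≤ ℓ) :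
    let μ : ℝ := ((ℓ : ℝ) - 1) * ((ℓ : ℝ) + 2)
    let w : ℝ := ((ℓ : ℝ) - 1) * (ℓ : ℝ) * ((ℓ : ℝ) + 1) * ((ℓ : ℝ) + 2) / (12 * M)
    let f : ℝ → ℝ := fun r => 1 - 2 * M / r - Λ * r ^ 2 / 3
    let W : ℝ → ℝ := fun r => w + 6 * M * f r / (r * (μ * r + 6 * M))
    let Z : ℝ → ℝ := fun r =>
      (2 * M * Λ * r ^ 3 + μ * r * (r - 3 * M) - 6 * M ^ 2)
        / (r ^ 2 * (μ * r + 6 * M))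
    ∀ r : ℝ, 0 < r → μ * r + 6 * M ≠ 0 →
      (f r * ((ℓ : ℝ) * ((ℓ : ℝ) + 1) / r ^ 2 - 6 * M / r ^ 3)
          + f r * deriv W r + Z r * W r
        = -(Λ * (ℓ : ℝ) * ((ℓ : ℝ) + 1)) / 6 + (Λ * M + w) / r
          + ((ℓ : ℝ) * ((ℓ : ℝ) + 1) - 6 * M * w) / (2 * r ^ 2)
          - ((ℓ : ℝ) * ((ℓ : ℝ) + 1) + 3) * M / r ^ 3 + 6 * M ^ 2 / r ^ 4) ∧
      W r + Z r = w + (r - 3 * M) / r ^ 2 := by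
  intro μ w f W Z r hr hden
  exact stmt_18_key M Λ hM (ℓ : ℝ) r hr hden
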